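/- Let B be a skew-symmetrizable n×n integer matrix, let t be a vertex reached from the initial vertex t_0 by a path, let t' be obtained from t by one further mutation in direction ℓ, and let ε ∈ {±1}. Then F^{B;t_0}_{t'} = F^{B;t_0}_t (J_ℓ + [−εB_t]^{•ℓ}_+) + [−εC^{B;t_0}_t]^{•ℓ}_+ + [εC^{−B;t_0}_t]^{•ℓ}_+, where C^{−B;t_0}_t denotes the C-matrix for the initial matrix −B along the same path. -/

import Mathlib

open Matrix

section Defs

variable {ι : Type} [Fintype ι] [DecidableEq ι]
variable {R : Type} [CommRing R] [LinearOrder R] [IsStrictOrderedRing R]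

/-- Entrywise positive part `[A]₊`. -/
def matPos (A : Matrix ι ι R) : Matrix ι ι R := fun i j => max (A i j) 0

/-- `A^{k•}`: the matrix keeping only the `k`-th row of `A`. -/
def rowSel (k : ι) (A : Matrix ι ι R) : Matrix ι ι R := fun i j => if i = k then A i j else 0

/-- `A^{•k}`: the matrix keeping only the `k`-th column of `A`. -/
def colSel (k : ι) (A : Matrix ι ι R) : Matrix ι ι R := fun i j => if j = k then A i j else 0

/-- Entrywise maximum of two matrices. -/
def emax (A B : Matrix ι ι R) : Matrix ι ι R := fun i j => max (A i j) (B i j)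

/-- `J_ℓ`: identity matrix with `(ℓ,ℓ)` entry replaced by `-1`. -/
def Jmat (ℓ : ι) : Matrix ι ι R := Matrix.diagonal fun i => if i = ℓ then -1 else 1

/-- Matrix mutation `μ_k(B)` in direction `k`. -/
def mutate (B : Matrix ι ι R) (k : ι) : Matrix ι ι R := fun i j =>
  if i = k ∨ j = k then -(B i j)
  else B i j + max (B i k) 0 * B k j + B i k * max (-(B k j)) 0

/-- The data `(B_t, C_t, G_t, F_t)` attached to a vertex. -/
structure SeedData (ι R : Type) where
  B : Matrix ι ι R
  C : Matrix ι ι R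
  G : Matrix ι ι R
  F : Matrix ι ι R

/-- One final-seed mutation step in direction `ℓ` (with initial exchange matrix `B0`). -/
def seedStep (B0 : Matrix ι ι R) (s : SeedData ι R) (ℓ : ι) : SeedData ι R where
  B := mutate s.B ℓ
  C := s.C * (Jmat ℓ + rowSel ℓ (matPos s.B)) + colSel ℓ (matPos (-s.C)) * s.B
  G := s.G * (Jmat ℓ + colSel ℓ (matPos s.B)) - B0 * colSel ℓ (matPos s.C)
  F := s.F * Jmat ℓ + emax (colSel ℓ (matPos s.C) + s.F * colSel ℓ (matPos s.B))
      (colSel ℓ (matPos (-s.C)) + s.F * colSel ℓ (matPos (-s.B)))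

/-- The seed data at the endpoint of the path `p` starting from the initial vertex. -/
def seedOf (B0 : Matrix ι ι R) (p : List ι) : SeedData ι R :=
  p.foldl (seedStep B0) ⟨B0, 1, 1, 0⟩

/-- The exchange matrix `B_t` at the end of the path `p`. -/
def Bpath (B : Matrix ι ι R) (p : List ι) : Matrix ι ι R := (seedOf B p).B

/-- The `C`-matrix `C^{B;t_0}_t` at the end of the path `p`. -/
def Cmat (B : Matrix ι ι R) (p : List ι) : Matrix ι ι R := (seedOf B p).C

/-- The `G`-matrix `G^{B;t_0}_t` at the end of the path `p`. -/
def Gmat (B : Matrix ι ι R) (p : List ι) : Matrix ι ι R := (seedOf B p).G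

/-- The `F`-matrix `F^{B;t_0}_t` at the end of the path `p`. -/
def Fmat (B : Matrix ι ι R) (p : List ι) : Matrix ι ι R := (seedOf B p).F

/-- `B` is skew-symmetrizable: `DB` is skew-symmetric for some positive diagonal `D`. -/
def IsSkewSymmetrizable (B : Matrix ι ι ℤ) : Prop :=
  ∃ d : ι → ℤ, (∀ i, 0 < d i) ∧ (Matrix.diagonal d * B)ᵀ = -(Matrix.diagonal d * B)

/-- Column sign-coherence: every column is nonzero and has all entries of one sign. -/
def ColSignCoherent (A : Matrix ι ι ℤ) : Prop :=
  ∀ j, (∃ i, A i j ≠ 0) ∧ ((∀ i, 0 ≤ A i j) ∨ (∀ i, A i j ≤ 0))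

/-- Row sign-coherence: every row is nonzero and has all entries of one sign. -/
def RowSignCoherent (A : Matrix ι ι ℤ) : Prop :=
  ∀ i, (∃ j, A i j ≠ 0) ∧ ((∀ j, 0 ≤ A i j) ∨ (∀ j, A i j ≤ 0))

/-- `ε` is the column sign `ε_{•ℓ}(A)` of the (sign-coherent, nonzero) `ℓ`-th column of `A`. -/
def IsColSign (ε : ℤ) (A : Matrix ι ι ℤ) (ℓ : ι) : Prop :=
  (ε = 1 ∨ ε = -1) ∧ (∃ i, A i ℓ ≠ 0) ∧ ∀ i, 0 ≤ ε * A i ℓ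

/-- `ε` is the row sign `ε_{k•}(A)` of the (sign-coherent, nonzero) `k`-th row of `A`. -/
def IsRowSign (ε : ℤ) (A : Matrix ι ι ℤ) (k : ι) : Prop :=
  (ε = 1 ∨ ε = -1) ∧ (∃ j, A k j ≠ 0) ∧ ∀ j, 0 ≤ ε * A k j

/-- Sign-coherence of `C`-matrices: for every skew-symmetrizable initial integer matrix and
every path, the associated `C`-matrix is column sign-coherent. -/
def SignCoherenceOfC : Prop :=
  ∀ (κ : Type) [Fintype κ] [DecidableEq κ], ∀ B : Matrix κ κ ℤ,
    IsSkewSymmetrizable B → ∀ p : List κ, ColSignCoherent (Cmat B p)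

/-- The principal extension `B̄ = [[B, -I],[I, O]]` of `B`, on the index type `Fin n ⊕ Fin n`. -/
def pext {n : ℕ} (B : Matrix (Fin n) (Fin n) ℤ) :
    Matrix (Fin n ⊕ Fin n) (Fin n ⊕ Fin n) ℤ :=
  Matrix.fromBlocks B (-1) 1 0

noncomputable section FPolys

/-- The ambient field of rational functions `ℚ(y_i : i ∈ ι)` (fraction field of `ℤ[y_i]`). -/
abbrev FField (ι : Type) := FractionRing (MvPolynomial ι ℤ)

/-- The variable `y_i` inside the fraction field. -/
def yvar (i : ι) : FField ι := algebraMap (MvPolynomial ι ℤ) (FField ι) (MvPolynomial.X i)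

/-- One mutation step for the triple `(B_t, C_t, (F_{j;t})_j)`. -/
def fpolyStep (s : Matrix ι ι ℤ × Matrix ι ι ℤ × (ι → FField ι)) (ℓ : ι) :
    Matrix ι ι ℤ × Matrix ι ι ℤ × (ι → FField ι) :=
  ⟨mutate s.1 ℓ,
   s.2.1 * (Jmat ℓ + rowSel ℓ (matPos s.1)) + colSel ℓ (matPos (-s.2.1)) * s.1,
   fun j => if j = ℓ then
     (s.2.2 ℓ)⁻¹ *
       ((∏ i, yvar i ^ (max (s.2.1 i ℓ) 0).toNat) * (∏ i, s.2.2 i ^ (max (s.1 i ℓ) 0).toNat)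
        + (∏ i, yvar i ^ (max (-(s.2.1 i ℓ)) 0).toNat) *
            (∏ i, s.2.2 i ^ (max (-(s.1 i ℓ)) 0).toNat))
   else s.2.2 j⟩

/-- The `F`-polynomial `F^{B;t_0}_{j;t}` (as an element of the field of rational functions)
at the end of the path `p`. -/
def Fpoly (B : Matrix ι ι ℤ) (p : List ι) : ι → FField ι :=
  (p.foldl fpolyStep ⟨B, 1, fun _ => 1⟩).2.2

/-- The polynomial representing an element of the fraction field (when it is a polynomial). -/
def polyOf (x : FField ι) : MvPolynomial ι ℤ := by
  classical exact
    if h : ∃ q : MvPolynomial ι ℤ, algebraMap (MvPolynomial ι ℤ) (FField ι) q = x then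
      h.choose else 0

/-- The `H`-matrix `H^{B;t_0}_t`: `h_{ij;t}` is the minimum over exponent vectors `a` in the
support of `F^{B;t_0}_{j;t}` of `-a_i + ∑_{l ≠ i} [-b_{il}]₊ a_l`. -/
def Hmat (B : Matrix ι ι ℤ) (p : List ι) : Matrix ι ι ℤ := fun i j =>
  if h : (polyOf (Fpoly B p j)).support.Nonempty then
    (polyOf (Fpoly B p j)).support.inf' h
      (fun a => -(a i : ℤ) + ∑ l ∈ Finset.univ.erase i, max (-(B i l)) 0 * (a l : ℤ))
  else 0

end FPolys

/-- The embedding `ℚ(y_1,…,y_n) → ℚ(y_1,…,y_{2n})` sending `y_i` to `y_i`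
(the second batch of variables indexed by the right summand). -/
noncomputable def embK (n : ℕ) : FField (Fin n) →+* FField (Fin n ⊕ Fin n) :=
  IsFractionRing.lift
    (g := (algebraMap (MvPolynomial (Fin n ⊕ Fin n) ℤ) (FField (Fin n ⊕ Fin n))).comp
      (MvPolynomial.rename (Sum.inl : Fin n → Fin n ⊕ Fin n)).toRingHom)
    (by
      intro a b hab
      simp only [RingHom.coe_comp, Function.comp_apply, AlgHom.toRingHom_eq_coe,
        RingHom.coe_coe] at hab
      exact MvPolynomial.rename_injective _ Sum.inl_injective
        (IsFractionRing.injective (MvPolynomial (Fin n ⊕ Fin n) ℤ)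
          (FField (Fin n ⊕ Fin n)) hab))

/-- `D⁻¹ Cᵀ D` over `ℚ`, for the positive diagonal skew-symmetrizer `D = diagonal d`. -/
noncomputable def dCd {n : ℕ} (d : Fin n → ℤ) (C : Matrix (Fin n) (Fin n) ℤ) :
    Matrix (Fin n) (Fin n) ℚ :=
  (Matrix.diagonal fun i => (d i : ℚ))⁻¹ * (C.map (Int.cast : ℤ → ℚ))ᵀ *
    Matrix.diagonal fun i => (d i : ℚ)

end Defs

section Aux

variable {n : ℕ}

private lemma pp (x : ℤ) : max x 0 = x + max (-x) 0 := by
  rcases le_total x 0 with h | h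
  · simp [max_eq_right h, max_eq_left (neg_nonneg.mpr h)]
  · simp [max_eq_left h, max_eq_right (neg_nonpos.mpr h)]

private lemma maxadd (a b : ℤ) : max a b = b + max (a - b) 0 := by
  rcases le_total a b with h | h
  · simp [max_eq_right h, max_eq_right (sub_nonpos.mpr h)]
  · simp [max_eq_left h, max_eq_left (sub_nonneg.mpr h)]

private lemma maxadd' (a b : ℤ) : max a b = a + max (b - a) 0 := by
  rw [max_comm]; exact maxadd b a

private lemma pmul {a : ℤ} (ha : 0 ≤ a) (x : ℤ) : a * max x 0 = max (a * x) 0 := by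
  rw [mul_max_of_nonneg _ _ ha, mul_zero]

lemma seedOf_append (B : Matrix (Fin n) (Fin n) ℤ) (p : List (Fin n)) (ℓ : Fin n) :
    seedOf B (p ++ [ℓ]) = seedStep B (seedOf B p) ℓ := by
  simp [seedOf, List.foldl_append]

lemma mul_J_apply (A : Matrix (Fin n) (Fin n) ℤ) (ℓ i j : Fin n) :
    (A * (Jmat ℓ : Matrix (Fin n) (Fin n) ℤ)) i j = if j = ℓ then -(A i j) else A i j := by
  rw [Jmat, Matrix.mul_diagonal]; split_ifs <;> ring

lemma mul_rowSel_apply (A M : Matrix (Fin n) (Fin n) ℤ) (ℓ i j : Fin n) :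
    (A * rowSel ℓ M) i j = A i ℓ * M ℓ j := by
  rw [Matrix.mul_apply, Finset.sum_eq_single ℓ]
  · simp [rowSel]
  · intro k _ hk; simp [rowSel, hk]
  · simp

lemma mul_J_rowSel_apply (A M : Matrix (Fin n) (Fin n) ℤ) (ℓ i j : Fin n) :
    (A * ((Jmat ℓ : Matrix (Fin n) (Fin n) ℤ) + rowSel ℓ M)) i j
      = (if j = ℓ then -(A i j) else A i j) + A i ℓ * M ℓ j := by
  rw [Matrix.mul_add, Matrix.add_apply, mul_J_apply, mul_rowSel_apply]

lemma colSel_mul_apply (N A : Matrix (Fin n) (Fin n) ℤ) (ℓ i j : Fin n) :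
    (colSel ℓ N * A) i j = N i ℓ * A ℓ j := by
  rw [Matrix.mul_apply, Finset.sum_eq_single ℓ]
  · simp [colSel]
  · intro k _ hk; simp [colSel, hk]
  · simp

lemma mul_colSel_apply (A M : Matrix (Fin n) (Fin n) ℤ) (ℓ i j : Fin n) :
    (A * colSel ℓ M) i j = if j = ℓ then ∑ k, A i k * M k ℓ else 0 := by
  rw [Matrix.mul_apply]
  split_ifs with h
  · subst h; exact Finset.sum_congr rfl fun k _ => by simp [colSel]
  · exact Finset.sum_eq_zero fun k _ => by simp [colSel, h]

lemma mul_J_colSel_apply (A M : Matrix (Fin n) (Fin n) ℤ) (ℓ i j : Fin n) :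
    (A * ((Jmat ℓ : Matrix (Fin n) (Fin n) ℤ) + colSel ℓ M)) i j
      = if j = ℓ then -(A i j) + ∑ k, A i k * M k ℓ else A i j := by
  rw [Matrix.mul_add, Matrix.add_apply, mul_J_apply, mul_colSel_apply]
  split_ifs <;> ring

end Aux
section Aux2

variable {n : ℕ}

lemma Bpath_append (B : Matrix (Fin n) (Fin n) ℤ) (p : List (Fin n)) (ℓ : Fin n) :
    Bpath B (p ++ [ℓ]) = mutate (Bpath B p) ℓ := by
  rw [Bpath, seedOf_append]; rfl

lemma Cmat_append_apply (B : Matrix (Fin n) (Fin n) ℤ) (p : List (Fin n)) (ℓ i j : Fin n) :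
    Cmat B (p ++ [ℓ]) i j
      = (if j = ℓ then -(Cmat B p i j) else Cmat B p i j)
        + Cmat B p i ℓ * max (Bpath B p ℓ j) 0
        + max (-(Cmat B p i ℓ)) 0 * Bpath B p ℓ j := by
  rw [Cmat, seedOf_append]
  show ((Cmat B p * (Jmat ℓ + rowSel ℓ (matPos (Bpath B p)))
      + colSel ℓ (matPos (-(Cmat B p))) * Bpath B p : Matrix (Fin n) (Fin n) ℤ)) i j = _
  rw [Matrix.add_apply, mul_J_rowSel_apply, colSel_mul_apply]
  simp [matPos, Matrix.neg_apply]

lemma Fmat_append_apply (B : Matrix (Fin n) (Fin n) ℤ) (p : List (Fin n)) (ℓ i j : Fin n) :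
    Fmat B (p ++ [ℓ]) i j
      = if j = ℓ then -(Fmat B p i j)
            + max (max (Cmat B p i ℓ) 0 + ∑ k, Fmat B p i k * max (Bpath B p k ℓ) 0)
                  (max (-(Cmat B p i ℓ)) 0 + ∑ k, Fmat B p i k * max (-(Bpath B p k ℓ)) 0)
         else Fmat B p i j := by
  rw [Fmat, seedOf_append]
  show ((Fmat B p * Jmat ℓ
      + emax (colSel ℓ (matPos (Cmat B p)) + Fmat B p * colSel ℓ (matPos (Bpath B p)))
          (colSel ℓ (matPos (-(Cmat B p))) + Fmat B p * colSel ℓ (matPos (-(Bpath B p))))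
      : Matrix (Fin n) (Fin n) ℤ)) i j = _
  rw [Matrix.add_apply, mul_J_apply]
  by_cases h : j = ℓ
  · subst h
    simp [emax, Matrix.add_apply, mul_colSel_apply, colSel, matPos, Matrix.neg_apply]
  · simp only [emax, Matrix.add_apply, mul_colSel_apply, if_neg h, colSel, matPos,
      Matrix.neg_apply]
    simp [h]

lemma mutate_neg (A : Matrix (Fin n) (Fin n) ℤ) (k : Fin n) :
    mutate (-A) k = -(mutate A k) := by
  funext i j
  by_cases h : i = k ∨ j = k
  · simp [mutate, h]
  · simp only [mutate, if_neg h, Matrix.neg_apply, neg_neg]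
    rw [pp (A i k), pp (A k j)]
    ring

lemma mutate_skew {d : Fin n → ℤ} (hd : ∀ i, 0 < d i) {A : Matrix (Fin n) (Fin n) ℤ}
    (h : ∀ i j, d i * A i j = -(d j * A j i)) (k : Fin n) :
    ∀ i j, d i * mutate A k i j = -(d j * mutate A k j i) := by
  intro i j
  by_cases hij : i = k ∨ j = k
  · have hji : j = k ∨ i = k := hij.symm
    simp only [mutate, if_pos hij, if_pos hji, mul_neg, neg_neg]
    linarith [h i j]
  · push_neg at hij
    have hji : ¬(j = k ∨ i = k) := by tauto
    simp only [mutate, if_neg (by tauto : ¬(i = k ∨ j = k)), if_neg hji]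
    have hk := (hd k).ne'
    have E1 : d i * max (A i k) 0 = d k * max (-(A k i)) 0 := by
      rw [pmul (hd i).le, pmul (hd k).le, mul_neg, ← h i k]
    have E2 : d k * max (-(A k j)) 0 = d j * max (A j k) 0 := by
      rw [pmul (hd k).le, pmul (hd j).le, mul_neg, ← neg_eq_iff_eq_neg.mpr (h k j)]
    have T2 : d i * (max (A i k) 0 * A k j) = -(d j * (A j k * max (-(A k i)) 0)) := by
      have hcan : d k * (d i * (max (A i k) 0 * A k j))
          = d k * (-(d j * (A j k * max (-(A k i)) 0))) := by
        linear_combination (d k * A k j) * E1 + (d k * max (-(A k i)) 0) * h k j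
      exact mul_left_cancel₀ hk hcan
    have T3 : d i * (A i k * max (-(A k j)) 0) = -(d j * (max (A j k) 0 * A k i)) := by
      have hcan : d k * (d i * (A i k * max (-(A k j)) 0))
          = d k * (-(d j * (max (A j k) 0 * A k i))) := by
        linear_combination (d i * A i k) * E2 + (d j * max (A j k) 0) * h i k
      exact mul_left_cancel₀ hk hcan
    linear_combination h i j + T2 + T3

end Aux2
section Aux3

variable {n : ℕ}

lemma mut_sum (F Bt : Matrix (Fin n) (Fin n) ℤ) (v : ℤ) (i ℓ : Fin n)
    (hdiag : Bt ℓ ℓ = 0) (j : Fin n) :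
    ∑ k, (if k = ℓ then v else F i k) * mutate Bt ℓ k j
      = if j = ℓ then -(∑ k, F i k * Bt k ℓ)
        else (∑ k, F i k * Bt k j)
          + (∑ k, F i k * max (Bt k ℓ) 0) * Bt ℓ j
          + (∑ k, F i k * Bt k ℓ) * max (-(Bt ℓ j)) 0
          - (v + F i ℓ) * Bt ℓ j := by
  by_cases hj : j = ℓ
  · subst hj
    rw [if_pos rfl, ← Finset.sum_neg_distrib]
    refine Finset.sum_congr rfl fun k _ => ?_
    by_cases hk : k = j
    · subst hk; simp [mutate, hdiag]
    · simp [mutate, hk, mul_neg]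
  · rw [if_neg hj]
    have key : ∀ k, (if k = ℓ then v else F i k) * mutate Bt ℓ k j
        = F i k * Bt k j + F i k * max (Bt k ℓ) 0 * Bt ℓ j
          + F i k * Bt k ℓ * max (-(Bt ℓ j)) 0
          + (if k = ℓ then -((v + F i ℓ) * Bt ℓ j) else 0) := by
      intro k
      by_cases hk : k = ℓ
      · subst hk; simp [mutate, hdiag, hj]; ring
      · have hc : ¬(k = ℓ ∨ j = ℓ) := by tauto
        simp only [mutate, if_neg hc, if_neg hk]
        ring
    rw [Finset.sum_congr rfl fun k _ => key k, Finset.sum_add_distrib,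
      Finset.sum_add_distrib, Finset.sum_add_distrib,
      Finset.sum_ite_eq' Finset.univ ℓ, ← Finset.sum_mul, ← Finset.sum_mul]
    simp only [Finset.mem_univ, if_true]
    ring

lemma sum_pp (F Bt : Matrix (Fin n) (Fin n) ℤ) (i ℓ : Fin n) :
    (∑ k, F i k * max (Bt k ℓ) 0)
      = (∑ k, F i k * Bt k ℓ) + ∑ k, F i k * max (-(Bt k ℓ)) 0 := by
  rw [← Finset.sum_add_distrib]
  refine Finset.sum_congr rfl fun k _ => ?_
  rw [pp (Bt k ℓ)]; ring

lemma key_duality (B : Matrix (Fin n) (Fin n) ℤ) (d : Fin n → ℤ) (hd : ∀ i, 0 < d i)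
    (hskew : ∀ i j, d i * B i j = -(d j * B j i)) (p : List (Fin n)) :
    (∀ i j, d i * Bpath B p i j = -(d j * Bpath B p j i)) ∧
      Bpath (-B) p = -Bpath B p ∧
      Cmat (-B) p = Cmat B p + Fmat B p * Bpath B p := by
  induction p using List.reverseRecOn with
  | nil =>
    refine ⟨hskew, rfl, ?_⟩
    show (1 : Matrix (Fin n) (Fin n) ℤ) = 1 + 0 * B
    simp
  | append_singleton p ℓ ih =>
    obtain ⟨ihs, ihB, ihC⟩ := ih
    have hdiag : ∀ m, Bpath B p m m = 0 := by
      intro m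
      have h2 : d m * Bpath B p m m = 0 := by linarith [ihs m m]
      rcases mul_eq_zero.mp h2 with h | h
      · exact absurd h (hd m).ne'
      · exact h
    refine ⟨by rw [Bpath_append]; exact mutate_skew hd ihs ℓ,
      by rw [Bpath_append, Bpath_append, ihB, mutate_neg], ?_⟩
    funext i j
    have hFrow : ∀ k, Fmat B (p ++ [ℓ]) i k
        = (if k = ℓ then -(Fmat B p i ℓ)
              + max (max (Cmat B p i ℓ) 0 + ∑ k, Fmat B p i k * max (Bpath B p k ℓ) 0)
                    (max (-(Cmat B p i ℓ)) 0 + ∑ k, Fmat B p i k * max (-(Bpath B p k ℓ)) 0)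
           else Fmat B p i k) := by
      intro k
      rw [Fmat_append_apply]
      by_cases hk : k = ℓ <;> simp [hk]
    show Cmat (-B) (p ++ [ℓ]) i j = _ + (Fmat B (p ++ [ℓ]) * Bpath B (p ++ [ℓ])) i j
    rw [Cmat_append_apply, Cmat_append_apply, Matrix.mul_apply,
      Bpath_append, ihB, ihC]
    simp only [hFrow]
    rw [mut_sum _ _ _ i ℓ (hdiag ℓ) j]
    simp only [Matrix.add_apply, Matrix.mul_apply, Matrix.neg_apply]
    by_cases hj : j = ℓ
    · subst hj
      simp only [hdiag j, neg_zero, max_self, mul_zero, zero_mul, add_zero, neg_neg, if_true]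
      ring
    · rw [if_neg hj, if_neg hj, if_neg hj]
      have hPQ := sum_pp (Fmat B p) (Bpath B p) i ℓ
      have hx := pp (Bpath B p ℓ j)
      have hcu := pp (Cmat B p i ℓ + ∑ k, Fmat B p i k * Bpath B p k ℓ)
      have hM : max (max (Cmat B p i ℓ) 0 + ∑ k, Fmat B p i k * max (Bpath B p k ℓ) 0)
            (max (-(Cmat B p i ℓ)) 0 + ∑ k, Fmat B p i k * max (-(Bpath B p k ℓ)) 0)
          = (max (-(Cmat B p i ℓ)) 0 + ∑ k, Fmat B p i k * max (-(Bpath B p k ℓ)) 0)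
            + max (Cmat B p i ℓ + ∑ k, Fmat B p i k * Bpath B p k ℓ) 0 := by
        rw [maxadd]
        congr 2
        rw [pp (Cmat B p i ℓ), hPQ]
        ring
      rw [hM]
      linear_combination (-(Cmat B p i ℓ)) * hx
        + (Bpath B p ℓ j) * hcu + (-(Bpath B p ℓ j)) * hPQ

end Aux3
/-- the final-seed mutation of the `F`-matrix in direction `ℓ`, for `ε ∈ {±1}`:
`F^{B;t_0}_{t'} = F^{B;t_0}_t (J_ℓ + [-εB_t]^{•ℓ}₊) + [-εC^{B;t_0}_t]^{•ℓ}₊ + [εC^{-B;t_0}_t]^{•ℓ}₊`. -/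
theorem Fmat_finalSeedMutation {n : ℕ} (B : Matrix (Fin n) (Fin n) ℤ)
    (hB : IsSkewSymmetrizable B) (p : List (Fin n)) (ℓ : Fin n)
    (ε : ℤ) (hε : ε = 1 ∨ ε = -1) :
    Fmat B (p ++ [ℓ]) =
      Fmat B p * (Jmat ℓ + colSel ℓ (matPos ((-ε) • Bpath B p)))
        + colSel ℓ (matPos ((-ε) • Cmat B p)) + colSel ℓ (matPos (ε • Cmat (-B) p)) := by
  obtain ⟨d, hd, hDB⟩ := hB
  have hskew : ∀ i j, d i * B i j = -(d j * B j i) := by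
    intro i j
    have h := congrFun (congrFun hDB j) i
    simp only [Matrix.transpose_apply, Matrix.neg_apply, Matrix.diagonal_mul] at h
    linarith
  obtain ⟨-, -, ihC⟩ := key_duality B d hd hskew p
  funext i j
  rw [Fmat_append_apply, Matrix.add_apply, Matrix.add_apply, mul_J_colSel_apply]
  by_cases hj : j = ℓ
  · subst hj
    rw [if_pos rfl, if_pos rfl]
    simp only [colSel, if_pos rfl, if_true, matPos, Matrix.smul_apply, smul_eq_mul, ihC,
      Matrix.add_apply, Matrix.mul_apply]
    have hPQ := sum_pp (Fmat B p) (Bpath B p) i j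
    have hppc := pp (Cmat B p i j)
    rcases hε with rfl | rfl
    · simp only [neg_mul, one_mul]
      rw [maxadd]
      have harg : max (Cmat B p i j) 0 + (∑ k, Fmat B p i k * max (Bpath B p k j) 0)
          - (max (-(Cmat B p i j)) 0 + ∑ k, Fmat B p i k * max (-(Bpath B p k j)) 0)
          = Cmat B p i j + ∑ k, Fmat B p i k * Bpath B p k j := by
        rw [hppc, hPQ]; ring
      rw [harg]
      ring
    · simp only [neg_neg, neg_mul, one_mul, neg_one_mul]
      rw [maxadd']
      have harg : max (-(Cmat B p i j)) 0 + (∑ k, Fmat B p i k * max (-(Bpath B p k j)) 0)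
          - (max (Cmat B p i j) 0 + ∑ k, Fmat B p i k * max (Bpath B p k j) 0)
          = -(Cmat B p i j + ∑ k, Fmat B p i k * Bpath B p k j) := by
        rw [hppc, hPQ]; ring
      rw [harg]
      ring
  · rw [if_neg hj, if_neg hj]
    simp [colSel, hj]
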